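/- As n → ∞, the Shannon object information entropy of the ordinal scale diverges, E_SE(O_n) → ∞, whereas the object information entropy converges, E_OE(O_n) → 1/2. -/

import Mathlib

open Finset

/-- A formal context `(G, M, I)` with finite object set `G`, finite attribute
set `M`, and incidence relation `I ⊆ G × M`. -/
structure FormalContext (α β : Type*) [DecidableEq α] [DecidableEq β] where
  G : Finset α
  M : Finset β
  I : Finset (α × β)
  inc : I ⊆ G ×ˢ M

namespace FormalContext

variable {α β : Type*} [DecidableEq α] [DecidableEq β]

/-- The derivation operator `A ↦ A' = {m ∈ M : ∀ g ∈ A, (g,m) ∈ I}`. -/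
def up (K : FormalContext α β) (A : Finset α) : Finset β :=
  K.M.filter fun m => ∀ g ∈ A, (g, m) ∈ K.I

/-- The derivation operator `B ↦ B' = {g ∈ G : ∀ m ∈ B, (g,m) ∈ I}`. -/
def down (K : FormalContext α β) (B : Finset β) : Finset α :=
  K.G.filter fun g => ∀ m ∈ B, (g, m) ∈ K.I

/-- The set `B(K)` of formal concepts of `K`: pairs `(A, B)` with `A' = B` and `B' = A`. -/
def concepts (K : FormalContext α β) : Finset (Finset α × Finset β) :=
  (K.G.powerset ×ˢ K.M.powerset).filter fun c => K.up c.1 = c.2 ∧ K.down c.2 = c.1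

/-- The extent label function `ℓ_K(g) = |{c ∈ B(K) : g ∈ ext(c)}|`. -/
def label (K : FormalContext α β) (g : α) : ℕ :=
  (K.concepts.filter fun c => g ∈ c.1).card

/-- The subcontext `K_N = (G, M \ N, I ∩ (G × (M \ N)))`. -/
def removeAttrs (K : FormalContext α β) (N : Finset β) : FormalContext α β where
  G := K.G
  M := K.M \ N
  I := K.I.filter fun p => p.2 ∉ N
  inc := by
    intro p hp
    rw [Finset.mem_filter] at hp
    have h := K.inc hp.1
    rw [Finset.mem_product] at h ⊢
    exact ⟨h.1, Finset.mem_sdiff.mpr ⟨h.2, hp.2⟩⟩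

/-- `m` is relevant to the object `g` iff `ℓ_{K_{m}}(g) < ℓ_K(g)`. -/
def RelevantTo (K : FormalContext α β) (m : β) (g : α) : Prop :=
  (K.removeAttrs {m}).label g < K.label g

/-- `m` is relevant to the context `K` iff it is relevant to some object `g ∈ G`. -/
def Relevant (K : FormalContext α β) (m : β) : Prop :=
  ∃ g ∈ K.G, K.RelevantTo m g

/-- `m` is irreducible iff there is no `X ⊆ M \ {m}` with `X' = m'`. -/
def Irreducible (K : FormalContext α β) (m : β) : Prop :=
  ¬ ∃ X ⊆ K.M \ {m}, K.down X = K.down {m}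

/-- `B(K)_N = {c ∈ B(K) : (int(c) \ N)' = ext(c)}`. -/
def conceptsRes (K : FormalContext α β) (N : Finset β) : Finset (Finset α × Finset β) :=
  K.concepts.filter fun c => K.down (c.2 \ N) = c.1

/-- The relative relevance `r(m) = 1 - (Σ_{g∈G} ℓ_{K_{m}}(g)) / (Σ_{g∈G} ℓ_K(g))`
of a single attribute `m`. -/
noncomputable def relRel (K : FormalContext α β) (m : β) : ℝ :=
  1 - (∑ g ∈ K.G, ((K.removeAttrs {m}).label g : ℝ)) / (∑ g ∈ K.G, (K.label g : ℝ))

/-- The relative relevance of an attribute set `N`,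
`r(N) = 1 - (Σ_{c ∈ B(K)_N} |ext(c)|) / (Σ_{c ∈ B(K)} |ext(c)|)`. -/
noncomputable def relRelSet (K : FormalContext α β) (N : Finset β) : ℝ :=
  1 - (∑ c ∈ K.conceptsRes N, (c.1.card : ℝ)) / (∑ c ∈ K.concepts, (c.1.card : ℝ))

/-- The Shannon object information entropy
`E_SE(K) = Σ_{g∈G} -(|g''|/|G|) log₂ (|g''|/|G|)`. -/
noncomputable def ESE (K : FormalContext α β) : ℝ :=
  ∑ g ∈ K.G, (-(((K.down (K.up {g})).card : ℝ) / (K.G.card : ℝ)) *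
    Real.logb 2 (((K.down (K.up {g})).card : ℝ) / (K.G.card : ℝ)))

/-- The object information entropy `E_OE(K) = (1/|G|) Σ_{g∈G} (1 - |g''|/|G|)`. -/
noncomputable def EOE (K : FormalContext α β) : ℝ :=
  (1 / (K.G.card : ℝ)) * ∑ g ∈ K.G, (1 - ((K.down (K.up {g})).card : ℝ) / (K.G.card : ℝ))

end FormalContext

/-- The ordinal scale `O_n = ([n], [n], ≤)`. -/
def ordinalScale (n : ℕ) : FormalContext ℕ ℕ where
  G := Finset.Icc 1 n
  M := Finset.Icc 1 n
  I := (Finset.Icc 1 n ×ˢ Finset.Icc 1 n).filter fun p => p.1 ≤ p.2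
  inc := Finset.filter_subset _ _

/-- The nominal scale `N_n = ([n], [n], =)`. -/
def nominalScale (n : ℕ) : FormalContext ℕ ℕ where
  G := Finset.Icc 1 n
  M := Finset.Icc 1 n
  I := (Finset.Icc 1 n ×ˢ Finset.Icc 1 n).filter fun p => p.1 = p.2
  inc := Finset.filter_subset _ _

/-- The contranominal scale `C_n = ([n], [n], ≠)`. -/
def contranominalScale (n : ℕ) : FormalContext ℕ ℕ where
  G := Finset.Icc 1 n
  M := Finset.Icc 1 n
  I := (Finset.Icc 1 n ×ˢ Finset.Icc 1 n).filter fun p => p.1 ≠ p.2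
  inc := Finset.filter_subset _ _

lemma ordinal_down_up (n g : ℕ) (hg : g ∈ Finset.Icc 1 n) :
    (ordinalScale n).down ((ordinalScale n).up {g}) = Finset.Icc 1 g := by
  rw [Finset.mem_Icc] at hg
  ext h
  rw [FormalContext.down, Finset.mem_filter]
  simp only [ordinalScale, FormalContext.down, FormalContext.up, Finset.mem_filter,
    Finset.mem_Icc, Finset.mem_singleton, Finset.mem_product, forall_eq]
  constructor
  · rintro ⟨⟨h1, h2⟩, H⟩
    refine ⟨h1, ?_⟩
    have := H g ⟨⟨hg.1, hg.2⟩, ⟨⟨hg.1, hg.2⟩, hg.1, hg.2⟩, le_refl g⟩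
    exact this.2
  · rintro ⟨h1, h2⟩
    refine ⟨⟨h1, le_trans h2 hg.2⟩, ?_⟩
    rintro m ⟨⟨hm1, hm2⟩, _, hgm⟩
    exact ⟨⟨⟨h1, le_trans h2 hg.2⟩, hm1, hm2⟩, le_trans h2 hgm⟩

lemma ordinal_down_up_card (n g : ℕ) (hg : g ∈ Finset.Icc 1 n) :
    ((ordinalScale n).down ((ordinalScale n).up {g})).card = g := by
  rw [ordinal_down_up n g hg, Nat.card_Icc]
  omega

lemma sum_Icc_id_real (k : ℕ) : ∑ g ∈ Finset.Icc 1 k, (g : ℝ) = k * (k + 1) / 2 := by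
  induction k with
  | zero => simp
  | succ k ih =>
    rw [Finset.sum_Icc_succ_top (by omega), ih]
    push_cast
    ring

lemma ordinal_ESE_eq (n : ℕ) :
    (ordinalScale n).ESE =
      ∑ g ∈ Finset.Icc 1 n, (-((g : ℝ) / n) * Real.logb 2 ((g : ℝ) / n)) := by
  unfold FormalContext.ESE
  have hGc : ((ordinalScale n).G.card : ℝ) = n := by
    show ((Finset.Icc 1 n).card : ℝ) = n
    rw [Nat.card_Icc]; norm_num
  refine Finset.sum_congr rfl fun g hg => ?_
  have hg' : g ∈ Finset.Icc 1 n := hg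
  rw [ordinal_down_up_card n g hg', hGc]

lemma ordinal_EOE_eq (n : ℕ) :
    (ordinalScale n).EOE =
      (1 / (n : ℝ)) * ∑ g ∈ Finset.Icc 1 n, (1 - (g : ℝ) / n) := by
  unfold FormalContext.EOE
  have hGc : ((ordinalScale n).G.card : ℝ) = n := by
    show ((Finset.Icc 1 n).card : ℝ) = n
    rw [Nat.card_Icc]; norm_num
  rw [hGc]
  congr 1
  refine Finset.sum_congr rfl fun g hg => ?_
  have hg' : g ∈ Finset.Icc 1 n := hg
  rw [ordinal_down_up_card n g hg']

/-- As `n → ∞`, `E_SE(O_n) → ∞` while `E_OE(O_n) → 1/2`. -/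
theorem ordinalScale_entropy_limits :
    Filter.Tendsto (fun n : ℕ => (ordinalScale n).ESE) Filter.atTop Filter.atTop ∧
    Filter.Tendsto (fun n : ℕ => (ordinalScale n).EOE) Filter.atTop
      (nhds (1 / 2 : ℝ)) := by
  constructor
  · -- ESE diverges
    have hlow : Filter.Tendsto (fun n : ℕ => (n : ℝ) / 8 - 1) Filter.atTop Filter.atTop := by
      apply Filter.tendsto_atTop_add_const_right
      exact (tendsto_natCast_atTop_atTop).atTop_div_const (by norm_num)
    apply Filter.tendsto_atTop_mono' _ _ hlow
    filter_upwards [Filter.eventually_ge_atTop 2] with n hn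
    rw [ordinal_ESE_eq]
    set k := n / 2 with hk
    have hkn : k ≤ n := Nat.div_le_self _ _
    have hk1 : (1:ℕ) ≤ k := by omega
    have hnpos : (0:ℝ) < n := by positivity
    have hnonneg : ∀ g ∈ Finset.Icc 1 n,
        0 ≤ -((g : ℝ) / n) * Real.logb 2 ((g : ℝ) / n) := by
      intro g hg
      rw [Finset.mem_Icc] at hg
      have h1 : (0:ℝ) < (g:ℝ) / n := by
        apply div_pos _ hnpos
        exact_mod_cast hg.1
      have h2 : (g:ℝ) / n ≤ 1 := by
        rw [div_le_one hnpos]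
        exact_mod_cast hg.2
      have := Real.logb_nonpos (b := 2) (by norm_num) h1.le h2
      nlinarith
    have hsub : Finset.Icc 1 k ⊆ Finset.Icc 1 n := Finset.Icc_subset_Icc_right hkn
    have step1 : ∑ g ∈ Finset.Icc 1 k, (-((g : ℝ) / n) * Real.logb 2 ((g : ℝ) / n)) ≤
        ∑ g ∈ Finset.Icc 1 n, (-((g : ℝ) / n) * Real.logb 2 ((g : ℝ) / n)) := by
      apply Finset.sum_le_sum_of_subset_of_nonneg hsub
      intro g hg _
      exact hnonneg g hg
    have step2 : ∑ g ∈ Finset.Icc 1 k, ((g : ℝ) / n) ≤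
        ∑ g ∈ Finset.Icc 1 k, (-((g : ℝ) / n) * Real.logb 2 ((g : ℝ) / n)) := by
      apply Finset.sum_le_sum
      intro g hg
      rw [Finset.mem_Icc] at hg
      have h1 : (0:ℝ) < (g:ℝ) / n := by
        apply div_pos _ hnpos
        exact_mod_cast hg.1
      have h2 : (g:ℝ) / n ≤ 1 / 2 := by
        have hgn : 2 * g ≤ n := by
          have := hg.2
          omega
        have hc : (2:ℝ) * g ≤ n := by exact_mod_cast hgn
        rw [div_le_div_iff₀ hnpos (by norm_num)]
        linarith
      have hlog : Real.logb 2 ((g : ℝ) / n) ≤ -1 := by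
        have := Real.logb_le_logb_of_le (b := 2) (by norm_num) h1 h2
        rwa [show (1:ℝ)/2 = 2⁻¹ by norm_num, Real.logb_inv,
          Real.logb_self_eq_one (by norm_num : (1:ℝ) < 2)] at this
      nlinarith
    have step3 : (n : ℝ) / 8 - 1 ≤ ∑ g ∈ Finset.Icc 1 k, ((g : ℝ) / n) := by
      rw [← Finset.sum_div, sum_Icc_id_real]
      have hkr : ((n : ℝ) - 1) / 2 ≤ (k : ℝ) := by
        have h2k : n ≤ 2 * k + 1 := by omega
        have : (n:ℝ) ≤ 2 * k + 1 := by exact_mod_cast h2k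
        linarith
      have hn2 : (2:ℝ) ≤ n := by exact_mod_cast hn
      have hk0 : (0:ℝ) ≤ k := by positivity
      rw [div_div, le_div_iff₀ (by positivity : (0:ℝ) < 2 * n)]
      nlinarith [mul_le_mul hkr (by linarith : ((n:ℝ) - 1) / 2 + 1 ≤ (k:ℝ) + 1) (by linarith) hk0]
    linarith
  · -- EOE converges to 1/2
    have heq : ∀ᶠ n : ℕ in Filter.atTop,
        (1 / 2 - 1 / (2 * (n : ℝ))) = (ordinalScale n).EOE := by
      filter_upwards [Filter.eventually_ge_atTop 1] with n hn
      rw [ordinal_EOE_eq, Finset.sum_sub_distrib, Finset.sum_const, Nat.card_Icc, Nat.add_sub_cancel,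
        ← Finset.sum_div, sum_Icc_id_real]
      have hnpos : (0:ℝ) < n := by positivity
      field_simp
      ring
    have h0 : Filter.Tendsto (fun n : ℕ => 1 / (2 * (n : ℝ))) Filter.atTop (nhds 0) := by
      have hre : (fun n : ℕ => 1 / (2 * (n : ℝ))) = fun n : ℕ => (1 / 2) * (1 / (n : ℝ)) := by
        funext n
        ring
      rw [hre]
      simpa using Filter.Tendsto.const_mul (1 / 2 : ℝ) tendsto_one_div_atTop_nhds_zero_nat
    have h1 : Filter.Tendsto (fun n : ℕ => 1 / 2 - 1 / (2 * (n : ℝ))) Filter.atTop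
        (nhds (1 / 2 : ℝ)) := by
      have := Filter.Tendsto.const_sub (1 / 2 : ℝ) h0
      simpa using this
    exact h1.congr' heq
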